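/- Let V, Q be Hilbert spaces, a : V×V → ℝ and b : V×Q → ℝ continuous bilinear forms with a coercive on the kernel V₀ = {v ∈ V : b(v,q) = 0 ∀q}, and b satisfying the inf-sup (LBB) condition sup_{v∈V} b(v,q)/‖v‖_V ≥ β‖q‖_Q for all q ∈ Q with β > 0. Then for any continuous linear functionals f ∈ V*, g ∈ Q*, the saddle-point problem a(u,v) + b(v,p) = f(v) ∀v, b(u,q) = g(q) ∀q has a unique solution (u,p) ∈ V × Q. -/

import Mathlib

open InnerProductSpace RealInnerProductSpace

lemma laxMilgram_exists' {E : Type*} [NormedAddCommGroup E] [InnerProductSpace ℝ E]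
    [CompleteSpace E] {B : E →L[ℝ] E →L[ℝ] ℝ} (hB : IsCoercive B) (φ : E →L[ℝ] ℝ) :
    ∃ x : E, ∀ y, B x y = φ y := by
  refine ⟨hB.continuousLinearEquivOfBilin.symm ((InnerProductSpace.toDual ℝ E).symm φ),
    fun y => ?_⟩
  rw [← hB.continuousLinearEquivOfBilin_apply, ContinuousLinearEquiv.apply_symm_apply,
    InnerProductSpace.toDual_symm_apply]

set_option maxHeartbeats 1000000 in
/-- Brezzi's theorem (existence and uniqueness): let `V, Q` be Hilbert spaces,
`a : V×V → ℝ`, `b : V×Q → ℝ` continuous bilinear forms, with `a` coercive on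
the kernel `V₀ = {v : b(v,·) = 0}` and `b` satisfying the inf-sup (LBB)
condition. Then the saddle-point problem
`a(u,v) + b(v,p) = f(v) ∀v`, `b(u,q) = g(q) ∀q` has a unique solution. -/
theorem brezzi_existence_uniqueness
    (V Q : Type*)
    [NormedAddCommGroup V] [InnerProductSpace ℝ V] [CompleteSpace V]
    [NormedAddCommGroup Q] [InnerProductSpace ℝ Q] [CompleteSpace Q]
    (a : V →ₗ[ℝ] V →ₗ[ℝ] ℝ) (b : V →ₗ[ℝ] Q →ₗ[ℝ] ℝ)
    (α₁ : ℝ) (ha_cont : ∀ u v : V, |a u v| ≤ α₁ * ‖u‖ * ‖v‖)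
    (β₁ : ℝ) (hb_cont : ∀ (v : V) (q : Q), |b v q| ≤ β₁ * ‖v‖ * ‖q‖)
    (α₂ : ℝ) (hα₂ : 0 < α₂)
    (ha_coer : ∀ v : V, (∀ q : Q, b v q = 0) → α₂ * ‖v‖ ^ 2 ≤ a v v)
    (β₂ : ℝ) (hβ₂ : 0 < β₂)
    (hb_infsup : ∀ q : Q, β₂ * ‖q‖ ≤ ⨆ v : V, b v q / ‖v‖)
    (f : V →L[ℝ] ℝ) (g : Q →L[ℝ] ℝ) :
    ∃! up : V × Q,
      (∀ v : V, a up.1 v + b v up.2 = f v) ∧ (∀ q : Q, b up.1 q = g q) := by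
  classical
  -- continuous bilinear forms
  have haN : ∀ u v : V, ‖a u v‖ ≤ α₁ * ‖u‖ * ‖v‖ := fun u v => by
    simpa [Real.norm_eq_abs] using ha_cont u v
  have hbN : ∀ (v : V) (q : Q), ‖b v q‖ ≤ β₁ * ‖v‖ * ‖q‖ := fun v q => by
    simpa [Real.norm_eq_abs] using hb_cont v q
  let a' : V →L[ℝ] V →L[ℝ] ℝ := LinearMap.mkContinuous₂ a α₁ haN
  let b' : V →L[ℝ] Q →L[ℝ] ℝ := LinearMap.mkContinuous₂ b β₁ hbN
  have ha'app : ∀ u v : V, a' u v = a u v := fun u v => rfl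
  have hb'app : ∀ (v : V) (q : Q), b' v q = b v q := fun v q => rfl
  -- the Riesz operator of b
  let Bt₀ : Q →ₗ[ℝ] V :=
    { toFun := fun q => (toDual ℝ V).symm (b'.flip q)
      map_add' := fun q q' => by simp
      map_smul' := fun r q => by simp }
  let Bt : Q →L[ℝ] V := Bt₀.mkContinuous ‖b'.flip‖ (fun q => by
    show ‖(toDual ℝ V).symm (b'.flip q)‖ ≤ _
    rw [LinearIsometryEquiv.norm_map]
    exact (b'.flip).le_opNorm q)
  have hBt : ∀ (q : Q) (v : V), ⟪Bt q, v⟫_ℝ = b v q := fun q v => by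
    show ⟪(toDual ℝ V).symm (b'.flip q), v⟫_ℝ = b v q
    rw [InnerProductSpace.toDual_symm_apply]
    rfl
  -- the kernel
  let V₀ : Submodule ℝ V := LinearMap.ker (b' : V →ₗ[ℝ] Q →L[ℝ] ℝ)
  have hV₀mem : ∀ v : V, v ∈ V₀ ↔ ∀ q, b v q = 0 := fun v => by
    rw [LinearMap.mem_ker, ContinuousLinearMap.ext_iff]
    exact forall_congr' fun q => by rw [ContinuousLinearMap.coe_coe, hb'app]; simp
  haveI : CompleteSpace V₀ := b'.isClosed_ker.completeSpace_coe
  -- lower bound for Bt from inf-sup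
  have hBtlow : ∀ q : Q, β₂ * ‖q‖ ≤ ‖Bt q‖ := fun q => by
    refine (hb_infsup q).trans (ciSup_le fun v => ?_)
    rcases eq_or_ne v 0 with rfl | hv
    · simp
    · rw [div_le_iff₀ (norm_pos_iff.mpr hv)]
      calc b v q = ⟪Bt q, v⟫_ℝ := (hBt q v).symm
        _ ≤ ‖Bt q‖ * ‖v‖ := real_inner_le_norm _ _
  -- the coercive form on Q
  let c : Q →L[ℝ] Q →L[ℝ] ℝ := b'.bilinearComp Bt (ContinuousLinearMap.id ℝ Q)
  have hcapp : ∀ q q' : Q, c q q' = b (Bt q) q' := fun q q' => rfl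
  have hccoer : IsCoercive c := by
    refine ⟨β₂ * β₂, mul_pos hβ₂ hβ₂, fun q => ?_⟩
    calc β₂ * β₂ * ‖q‖ * ‖q‖ = (β₂ * ‖q‖) * (β₂ * ‖q‖) := by ring
      _ ≤ ‖Bt q‖ * ‖Bt q‖ :=
        mul_le_mul (hBtlow q) (hBtlow q) (by positivity) (norm_nonneg _)
      _ = ⟪Bt q, Bt q⟫_ℝ := (real_inner_self_eq_norm_mul_norm _).symm
      _ = b (Bt q) q := hBt q (Bt q)
      _ = c q q := (hcapp q q).symm
  -- step 1 : solve b (u_g, q) = g q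
  obtain ⟨r, hr⟩ := laxMilgram_exists' hccoer g
  have hug : ∀ q : Q, b (Bt r) q = g q := fun q => (hcapp r q).symm.trans (hr q)
  -- step 2 : Lax-Milgram on V₀
  let a₀ : V₀ →L[ℝ] V₀ →L[ℝ] ℝ := a'.bilinearComp V₀.subtypeL V₀.subtypeL
  have ha₀app : ∀ v w : V₀, a₀ v w = a (v : V) (w : V) := fun v w => rfl
  have ha₀ : IsCoercive a₀ := by
    refine ⟨α₂, hα₂, fun v => ?_⟩
    have hv : ∀ q, b (v : V) q = 0 := (hV₀mem v).mp v.2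
    have h := ha_coer (v : V) hv
    have hn : ‖v‖ = ‖(v : V)‖ := rfl
    rw [ha₀app, hn]
    nlinarith [h]
  obtain ⟨u₀, hu₀⟩ := laxMilgram_exists' ha₀ ((f - a' (Bt r)).comp V₀.subtypeL)
  have hu₀' : ∀ w : V₀, a (u₀ : V) (w : V) = f w - a (Bt r) w := fun w => by
    have := hu₀ w
    rw [ha₀app] at this
    simpa [ha'app] using this
  -- the solution
  set u : V := Bt r + (u₀ : V) with hu
  have hbu : ∀ q : Q, b u q = g q := fun q => by
    have h0 : b (u₀ : V) q = 0 := (hV₀mem u₀).mp u₀.2 q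
    rw [hu, map_add, LinearMap.add_apply, hug, h0, add_zero]
  have hau : ∀ v : V, a u v = a (Bt r) v + a (u₀ : V) v := fun v => by
    rw [hu, map_add, LinearMap.add_apply]
  -- step 3 : find p
  let φ : V →L[ℝ] ℝ := f - a' u
  have hφ : ∀ v : V, φ v = f v - a u v := fun v => by
    simp [φ, ha'app]
  have hφ0 : ∀ z : V, z ∈ V₀ → φ z = 0 := fun z hz => by
    have := hu₀' ⟨z, hz⟩
    rw [hφ, hau]
    simp only [Submodule.coe_mk] at this
    linarith
  let w : V := (toDual ℝ V).symm φ
  have hw : ∀ v : V, ⟪w, v⟫_ℝ = φ v := fun v => InnerProductSpace.toDual_symm_apply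
  obtain ⟨p, hp⟩ := laxMilgram_exists' hccoer ((innerSL ℝ w).comp Bt)
  have hp' : ∀ q : Q, b (Bt p) q = ⟪w, Bt q⟫_ℝ := fun q => (hcapp p q).symm.trans (hp q)
  have hzker : ∀ q : Q, b (Bt p - w) q = 0 := fun q => by
    have h1 : ⟪Bt q, Bt p - w⟫_ℝ = ⟪Bt q, Bt p⟫_ℝ - ⟪Bt q, w⟫_ℝ := inner_sub_right _ _ _
    have h2 : ⟪Bt q, Bt p⟫_ℝ = ⟪w, Bt q⟫_ℝ := (hBt q (Bt p)).trans (hp' q)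
    have h3 : ⟪Bt q, w⟫_ℝ = ⟪w, Bt q⟫_ℝ := real_inner_comm _ _
    rw [← hBt q (Bt p - w), h1, h2, h3, sub_self]
  have hz0 : Bt p - w = 0 := by
    have hmem : Bt p - w ∈ V₀ := (hV₀mem _).mpr hzker
    have e1 : ⟪Bt p, Bt p - w⟫_ℝ = 0 := by
      rw [hBt p (Bt p - w)]
      exact hzker p
    have e2 : ⟪w, Bt p - w⟫_ℝ = 0 := by rw [hw]; exact hφ0 _ hmem
    have : ⟪Bt p - w, Bt p - w⟫_ℝ = 0 := by
      rw [inner_sub_left, e1, e2, sub_self]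
    exact inner_self_eq_zero.mp this
  have hBtp : Bt p = w := sub_eq_zero.mp hz0
  have hbp : ∀ v : V, b v p = f v - a u v := fun v => by
    rw [← hBt p v, hBtp, hw, hφ]
  -- conclusion
  refine ⟨(u, p), ⟨fun v => by rw [hbp v]; ring, hbu⟩, ?_⟩
  rintro ⟨u', p'⟩ ⟨h1, h2⟩
  have hd0 : ∀ q : Q, b (u' - u) q = 0 := fun q => by
    rw [map_sub, LinearMap.sub_apply, h2 q, hbu q, sub_self]
  have hdmem : u' - u ∈ V₀ := (hV₀mem _).mpr hd0
  have hde : ∀ v : V, a (u' - u) v + b v (p' - p) = 0 := fun v => by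
    have := h1 v
    have h4 := hbp v
    rw [map_sub, LinearMap.sub_apply, map_sub]
    linarith
  have hdd : a (u' - u) (u' - u) = 0 := by
    have := hde (u' - u)
    have h5 : b (u' - u) (p' - p) = 0 := hd0 (p' - p)
    linarith
  have hdzero : u' - u = 0 := by
    have hc := ha_coer (u' - u) hd0
    rw [hdd] at hc
    have hx : ‖u' - u‖ = 0 := by
      by_contra hne
      have hpos : 0 < ‖u' - u‖ := (norm_nonneg _).lt_of_ne (Ne.symm hne)
      have : 0 < α₂ * ‖u' - u‖ ^ 2 := by positivity
      linarith
    exact norm_eq_zero.mp hx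
  have hbe : ∀ v : V, b v (p' - p) = 0 := fun v => by
    have := hde v
    rw [hdzero, map_zero, LinearMap.zero_apply] at this
    linarith
  have hezero : p' - p = 0 := by
    have hs : (⨆ v : V, b v (p' - p) / ‖v‖) = 0 := by
      have : ∀ v : V, b v (p' - p) / ‖v‖ = 0 := fun v => by rw [hbe v, zero_div]
      simp only [this, ciSup_const]
    have := hb_infsup (p' - p)
    rw [hs] at this
    have : ‖p' - p‖ = 0 := le_antisymm (by nlinarith) (norm_nonneg _)
    exact norm_eq_zero.mp this
  have : u' = u := sub_eq_zero.mp hdzero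
  have hP : p' = p := sub_eq_zero.mp hezero
  simp [this, hP]
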